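/- The two stabilizer groups S_a = ⟨XXZIZI, ZXXZII, IZXXZI, ZIZXXI, IIIIIX⟩ and S_b = ⟨YIZXXY, ZXIIXZ, IZXXXX, IIIZIZ, ZZZIZI⟩ each define a 2-dimensional joint +1-eigenspace in (C^2)^{⊗6}, and these two subspaces are orthogonal; moreover, the resulting hybrid code has minimum distance 1, since the weight-1 error E = IIIIXI satisfies P_b E P_a ≠ 0. -/

import Mathlib

open Matrix Finset
open scoped InnerProductSpace

/-- Single-qubit Pauli matrices `I, X, Y, Z`, encoded as `0,1,2,3`. -/
noncomputable def pmat : Fin 4 → Matrix (ZMod 2) (ZMod 2) ℂ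
  | 0 => 1
  | 1 => fun i j => if i = j then 0 else 1
  | 2 => fun i j => if i = j then 0 else if i = 0 then -Complex.I else Complex.I
  | 3 => fun i j => if i = j then (if i = 0 then 1 else -1) else 0

/-- The six-qubit Pauli string determined by `s : Fin 6 → Fin 4`. -/
noncomputable def pauliString (s : Fin 6 → Fin 4) :
    Matrix (Fin 6 → ZMod 2) (Fin 6 → ZMod 2) ℂ :=
  fun y z => ∏ j, pmat (s j) (y j) (z j)

/-- Generators of `S_a = ⟨XXZIZI, ZXXZII, IZXXZI, ZIZXXI, IIIIIX⟩`. -/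
noncomputable def genA : Fin 5 → Matrix (Fin 6 → ZMod 2) (Fin 6 → ZMod 2) ℂ :=
  ![pauliString ![1,1,3,0,3,0], pauliString ![3,1,1,3,0,0],
    pauliString ![0,3,1,1,3,0], pauliString ![3,0,3,1,1,0],
    pauliString ![0,0,0,0,0,1]]

/-- Generators of `S_b = ⟨YIZXXY, ZXIIXZ, IZXXXX, IIIZIZ, ZZZIZI⟩`. -/
noncomputable def genB : Fin 5 → Matrix (Fin 6 → ZMod 2) (Fin 6 → ZMod 2) ℂ :=
  ![pauliString ![2,0,3,1,1,2], pauliString ![3,1,0,0,1,3],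
    pauliString ![0,3,1,1,1,1], pauliString ![0,0,0,3,0,3],
    pauliString ![3,3,3,0,3,0]]

/-- The projector onto the joint `+1`-eigenspace of the group generated by
five commuting stabilizer generators: `(1/32) Σ_{S ∈ group} S`. -/
noncomputable def stabProj
    (g : Fin 5 → Matrix (Fin 6 → ZMod 2) (Fin 6 → ZMod 2) ℂ) :
    Matrix (Fin 6 → ZMod 2) (Fin 6 → ZMod 2) ℂ :=
  (1 / 32 : ℂ) • ∑ v : Fin 5 → Bool,
    (List.ofFn (fun i => if v i then g i else 1)).prod

/-- The joint `+1`-eigenspace of the five generators, as a subspace of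
`(ℂ²)^{⊗6}`. -/
noncomputable def stabCode
    (g : Fin 5 → Matrix (Fin 6 → ZMod 2) (Fin 6 → ZMod 2) ℂ) :
    Submodule ℂ (EuclideanSpace ℂ (Fin 6 → ZMod 2)) :=
  ⨅ i : Fin 5, LinearMap.ker (Matrix.toEuclideanLin (g i) - LinearMap.id)

set_option maxRecDepth 8000
set_option maxHeartbeats 4000000

def e4 : Fin 4 → Fin 4 → ZMod 4 := ![![0,0,0,0],![0,0,1,3],![0,3,0,1],![0,1,3,0]]
def m4 : Fin 4 → Fin 4 → Fin 4 := ![![0,1,2,3],![1,0,3,2],![2,3,0,1],![3,2,1,0]]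

noncomputable def Ipow (k : ZMod 4) : ℂ := Complex.I ^ k.val

lemma sum_zmod2 (f : ZMod 2 → ℂ) : ∑ b, f b = f 0 + f 1 := by
  rw [show (univ : Finset (ZMod 2)) = {0, 1} by rfl]
  rw [Finset.sum_insert (by decide), Finset.sum_singleton]

lemma Ipow_mod (n : ℕ) : Complex.I ^ (n % 4) = Complex.I ^ n := by
  conv_rhs => rw [← Nat.div_add_mod n 4]
  rw [pow_add, pow_mul, Complex.I_pow_four, one_pow, one_mul]

lemma Ipow_add (x y : ZMod 4) : Ipow (x + y) = Ipow x * Ipow y := by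
  unfold Ipow
  rw [show (x + y).val = (x.val + y.val) % 4 from by
    have : ∀ x y : ZMod 4, (x + y).val = (x.val + y.val) % 4 := by decide
    exact this x y]
  rw [Ipow_mod, pow_add]

lemma zval0 : (0 : ZMod 4).val = 0 := rfl
lemma zval1 : (1 : ZMod 4).val = 1 := rfl
lemma zval2 : (2 : ZMod 4).val = 2 := rfl
lemma zval3 : (3 : ZMod 4).val = 3 := rfl

lemma pmat_mul (a b : Fin 4) : pmat a * pmat b = Ipow (e4 a b) • pmat (m4 a b) := by
  fin_cases a <;> fin_cases b <;>
    · ext i j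
      simp only [Matrix.mul_apply, Matrix.smul_apply]
      obtain rfl | rfl : i = 0 ∨ i = 1 := by revert i; decide
      all_goals obtain rfl | rfl : j = 0 ∨ j = 1 := by revert j; decide
      all_goals
        simp [pmat, e4, m4, Ipow, Matrix.mul_apply, sum_zmod2, Matrix.one_apply,
          zval0, zval1, zval2, zval3, Matrix.vecHead, Matrix.vecTail,
          pow_succ, Complex.I_mul_I] <;> ring_nf <;>
          simp [pow_succ, Complex.I_mul_I]

lemma pmat_conj (a : Fin 4) (i j : ZMod 2) :
    (starRingEnd ℂ) (pmat a i j) = pmat a j i := by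
  fin_cases a <;>
    (obtain rfl | rfl : i = 0 ∨ i = 1 := by revert i; decide) <;>
    (obtain rfl | rfl : j = 0 ∨ j = 1 := by revert j; decide) <;>
    simp [pmat, Matrix.one_apply]

lemma pmat_diag_sum (a : Fin 4) : (∑ b, pmat a b b) = if a = 0 then 2 else 0 := by
  fin_cases a <;> simp [sum_zmod2, pmat] <;> norm_num

abbrev Pp : Type := ZMod 4 × (Fin 6 → Fin 4)

def pmul (a b : Pp) : Pp :=
  (a.1 + b.1 + (e4 (a.2 0) (b.2 0) + e4 (a.2 1) (b.2 1) + e4 (a.2 2) (b.2 2)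
      + e4 (a.2 3) (b.2 3) + e4 (a.2 4) (b.2 4) + e4 (a.2 5) (b.2 5)),
   ![m4 (a.2 0) (b.2 0), m4 (a.2 1) (b.2 1), m4 (a.2 2) (b.2 2),
     m4 (a.2 3) (b.2 3), m4 (a.2 4) (b.2 4), m4 (a.2 5) (b.2 5)])

def pone : Pp := (0, fun _ => 0)

noncomputable def toMat (p : Pp) : Matrix (Fin 6 → ZMod 2) (Fin 6 → ZMod 2) ℂ :=
  Ipow p.1 • pauliString p.2

lemma pmul_symb (a b : Pp) (j : Fin 6) : (pmul a b).2 j = m4 (a.2 j) (b.2 j) := by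
  fin_cases j <;> rfl

lemma pauliString_mul (s t : Fin 6 → Fin 4) :
    pauliString s * pauliString t =
      fun y z => ∏ j, (pmat (s j) * pmat (t j)) (y j) (z j) := by
  funext y z
  rw [Matrix.mul_apply]
  unfold pauliString
  have : ∀ w : Fin 6 → ZMod 2,
      (∏ j, pmat (s j) (y j) (w j)) * ∏ j, pmat (t j) (w j) (z j)
      = ∏ j, (pmat (s j) (y j) (w j) * pmat (t j) (w j) (z j)) := by
    intro w; rw [Finset.prod_mul_distrib]
  simp only [this]
  rw [show (univ : Finset (Fin 6 → ZMod 2)) = Fintype.piFinset (fun _ => univ) from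
    (Fintype.piFinset_univ).symm]
  rw [Finset.sum_prod_piFinset (univ : Finset (ZMod 2))
    (fun j b => pmat (s j) (y j) b * pmat (t j) b (z j))]
  exact Finset.prod_congr rfl fun j _ => (Matrix.mul_apply).symm

lemma pauliString_one : pauliString (fun _ => 0) = 1 := by
  funext y z
  show (∏ j, pmat 0 (y j) (z j)) = (1 : Matrix (Fin 6 → ZMod 2) (Fin 6 → ZMod 2) ℂ) y z
  have : ∀ j, pmat 0 (y j) (z j) = if y j = z j then 1 else 0 := by
    intro j; simp [pmat, Matrix.one_apply]
  rw [show (∏ j, pmat 0 (y j) (z j)) = ∏ j, if y j = z j then (1:ℂ) else 0 from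
    Finset.prod_congr rfl fun j _ => this j]
  rw [Finset.prod_boole]
  simp [Matrix.one_apply, funext_iff]

lemma toMat_one : toMat pone = 1 := by
  unfold toMat pone
  simp [pauliString_one, Ipow]

lemma Ipow_sum6 (f : Fin 6 → ZMod 4) :
    Ipow (f 0 + f 1 + f 2 + f 3 + f 4 + f 5) = ∏ j, Ipow (f j) := by
  rw [Fin.prod_univ_six]
  simp only [Ipow_add]

lemma toMat_mul (a b : Pp) : toMat (pmul a b) = toMat a * toMat b := by
  unfold toMat
  rw [smul_mul_smul_comm, pauliString_mul]
  have hsym : pauliString ((pmul a b).2) = pauliString (fun j => m4 (a.2 j) (b.2 j)) := by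
    exact congrArg pauliString (funext (pmul_symb a b))
  rw [hsym]
  have hph : (pmul a b).1 = a.1 + b.1 + (e4 (a.2 0) (b.2 0) + e4 (a.2 1) (b.2 1)
      + e4 (a.2 2) (b.2 2) + e4 (a.2 3) (b.2 3) + e4 (a.2 4) (b.2 4) + e4 (a.2 5) (b.2 5)) := rfl
  funext y z
  show Ipow ((pmul a b).1) * ∏ j, pmat (m4 (a.2 j) (b.2 j)) (y j) (z j)
      = (Ipow a.1 * Ipow b.1) * ∏ j, (pmat (a.2 j) * pmat (b.2 j)) (y j) (z j)
  have : ∀ j : Fin 6, (pmat (a.2 j) * pmat (b.2 j)) (y j) (z j)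
      = Ipow (e4 (a.2 j) (b.2 j)) * pmat (m4 (a.2 j) (b.2 j)) (y j) (z j) := by
    intro j; rw [pmat_mul]; rfl
  simp only [this]
  rw [Finset.prod_mul_distrib, hph]
  have : (e4 (a.2 0) (b.2 0) + e4 (a.2 1) (b.2 1) + e4 (a.2 2) (b.2 2) + e4 (a.2 3) (b.2 3)
      + e4 (a.2 4) (b.2 4) + e4 (a.2 5) (b.2 5)) = ∑ j, e4 (a.2 j) (b.2 j) := by
    rw [Fin.sum_univ_six]
  rw [Ipow_add, Ipow_add, this]
  have h2 : Ipow (∑ j, e4 (a.2 j) (b.2 j)) = ∏ j, Ipow (e4 (a.2 j) (b.2 j)) := by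
    rw [← this, Ipow_sum6 (fun j => e4 (a.2 j) (b.2 j))]
  rw [h2]; ring

lemma toMat_listProd (l : List Pp) : (l.map toMat).prod = toMat (l.foldr pmul pone) := by
  induction l with
  | nil => simp [toMat_one]
  | cons h t ih => simp [List.foldr_cons, toMat_mul, ih]

lemma pauliString_herm (s : Fin 6 → Fin 4) : (pauliString s)ᴴ = pauliString s := by
  funext y z
  show (starRingEnd ℂ) (∏ j, pmat (s j) (z j) (y j)) = ∏ j, pmat (s j) (y j) (z j)
  rw [map_prod]
  exact Finset.prod_congr rfl fun j _ => pmat_conj _ _ _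

def pA : Fin 5 → Pp :=
  ![(0, ![1,1,3,0,3,0]), (0, ![3,1,1,3,0,0]), (0, ![0,3,1,1,3,0]),
    (0, ![3,0,3,1,1,0]), (0, ![0,0,0,0,0,1])]
def pB : Fin 5 → Pp :=
  ![(0, ![2,0,3,1,1,2]), (0, ![3,1,0,0,1,3]), (0, ![0,3,1,1,1,1]),
    (0, ![0,0,0,3,0,3]), (0, ![3,3,3,0,3,0])]
def qP (p : Fin 5 → Pp) (v : Fin 5 → Bool) : Pp :=
  (List.ofFn fun i => if v i then p i else pone).foldr pmul pone
def vof (n : Fin 32) : Fin 5 → Bool := fun i => n.val.testBit i.val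
def pf (i : Fin 5) (n : Fin 32) : Fin 32 :=
  ⟨(n.val ^^^ (1 <<< i.val)) % 32, Nat.mod_lt _ (by norm_num)⟩
def tZ (p : Pp) : GaussianInt := if p.2 = (fun _ => 0) then (⟨0,1⟩ : GaussianInt)^p.1.val else 0
def pE : Pp := (0, ![0,0,0,0,1,0])

lemma hvof : Function.Bijective vof := by decide

lemma trace_pauliString (s : Fin 6 → Fin 4) :
    (pauliString s).trace = ∏ j, (∑ b, pmat (s j) b b) := by
  unfold Matrix.trace Matrix.diag pauliString
  rw [show (univ : Finset (Fin 6 → ZMod 2)) = Fintype.piFinset (fun _ => univ) from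
    (Fintype.piFinset_univ).symm]
  rw [Finset.sum_prod_piFinset (univ : Finset (ZMod 2)) (fun j b => pmat (s j) b b)]

lemma toComplex_i : GaussianInt.toComplex (⟨0,1⟩ : GaussianInt) = Complex.I := by
  rw [GaussianInt.toComplex_def]; simp

lemma trace_toMat (p : Pp) :
    (toMat p).trace = 64 * GaussianInt.toComplex (tZ p) := by
  unfold toMat
  rw [Matrix.trace_smul, trace_pauliString]
  rw [show (∏ j, ∑ b, pmat (p.2 j) b b) = ∏ j, (if p.2 j = 0 then (2:ℂ) else 0) from
    Finset.prod_congr rfl fun j _ => pmat_diag_sum _]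
  unfold tZ
  by_cases h : p.2 = (fun _ => 0)
  · rw [if_pos h, map_pow, toComplex_i]
    have : ∀ j, (if p.2 j = 0 then (2:ℂ) else 0) = 2 := by intro j; rw [h]; simp
    rw [Finset.prod_congr rfl fun j _ => this j, Finset.prod_const]
    simp [Ipow, smul_eq_mul]
    ring
  · rw [if_neg h]
    obtain ⟨j, hj⟩ := Function.ne_iff.mp h
    rw [Finset.prod_eq_zero (Finset.mem_univ j) (by simp [hj])]
    simp

def tabA : Fin 32 → Pp :=
  ![(0, ![0,0,0,0,0,0]),
    (0, ![1,1,3,0,3,0]),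
    (0, ![3,1,1,3,0,0]),
    (0, ![2,0,2,3,3,0]),
    (0, ![0,3,1,1,3,0]),
    (0, ![1,2,2,1,0,0]),
    (0, ![3,2,0,2,3,0]),
    (0, ![2,3,3,2,0,0]),
    (0, ![3,0,3,1,1,0]),
    (0, ![2,1,0,1,2,0]),
    (0, ![0,1,2,2,1,0]),
    (0, ![1,0,1,2,2,0]),
    (0, ![3,3,2,0,2,0]),
    (0, ![2,2,1,0,1,0]),
    (0, ![0,2,3,3,2,0]),
    (0, ![1,3,0,3,1,0]),
    (0, ![0,0,0,0,0,1]),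
    (0, ![1,1,3,0,3,1]),
    (0, ![3,1,1,3,0,1]),
    (0, ![2,0,2,3,3,1]),
    (0, ![0,3,1,1,3,1]),
    (0, ![1,2,2,1,0,1]),
    (0, ![3,2,0,2,3,1]),
    (0, ![2,3,3,2,0,1]),
    (0, ![3,0,3,1,1,1]),
    (0, ![2,1,0,1,2,1]),
    (0, ![0,1,2,2,1,1]),
    (0, ![1,0,1,2,2,1]),
    (0, ![3,3,2,0,2,1]),
    (0, ![2,2,1,0,1,1]),
    (0, ![0,2,3,3,2,1]),
    (0, ![1,3,0,3,1,1])]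
def tabB : Fin 32 → Pp :=
  ![(0, ![0,0,0,0,0,0]),
    (0, ![2,0,3,1,1,2]),
    (0, ![3,1,0,0,1,3]),
    (2, ![1,1,3,1,0,1]),
    (0, ![0,3,1,1,1,1]),
    (0, ![2,3,2,0,0,3]),
    (0, ![3,2,1,1,0,2]),
    (2, ![1,2,2,0,1,0]),
    (0, ![0,0,0,3,0,3]),
    (0, ![2,0,3,2,1,1]),
    (0, ![3,1,0,3,1,0]),
    (0, ![1,1,3,2,0,2]),
    (2, ![0,3,1,2,1,2]),
    (0, ![2,3,2,3,0,0]),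
    (0, ![3,2,1,2,0,1]),
    (2, ![1,2,2,3,1,3]),
    (0, ![3,3,3,0,3,0]),
    (0, ![1,3,0,1,2,2]),
    (2, ![0,2,3,0,2,3]),
    (0, ![2,2,0,1,3,1]),
    (2, ![3,0,2,1,2,1]),
    (2, ![1,0,1,0,3,3]),
    (0, ![0,1,2,1,3,2]),
    (2, ![2,1,1,0,2,0]),
    (0, ![3,3,3,3,3,3]),
    (0, ![1,3,0,2,2,1]),
    (2, ![0,2,3,3,2,0]),
    (2, ![2,2,0,2,3,2]),
    (0, ![3,0,2,2,2,2]),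
    (2, ![1,0,1,3,3,0]),
    (0, ![0,1,2,2,3,1]),
    (2, ![2,1,1,3,2,3])]

lemma htabA : ∀ n : Fin 32, qP pA (vof n) = tabA n := by decide
lemma htabB : ∀ n : Fin 32, qP pB (vof n) = tabB n := by decide
lemma hpfbij : ∀ i : Fin 5, Function.Bijective (pf i) := by decide
lemma hpermA : ∀ (i : Fin 5) (n : Fin 32), pmul (pA i) (tabA n) = tabA (pf i n) := by decide
lemma hpermB : ∀ (i : Fin 5) (n : Fin 32), pmul (pB i) (tabB n) = tabB (pf i n) := by decide
lemma htZA : (∑ n : Fin 32, tZ (tabA n)) = 1 := by decide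
lemma htZB : (∑ n : Fin 32, tZ (tabB n)) = 1 := by decide
lemma hwit1 : pmul (pA 1) (pmul (pA 2) (pA 3)) = (0, ![0,2,3,3,2,0]) := by decide
lemma hwit2 : pmul (pB 1) (pmul (pB 3) (pB 4)) = (2, ![0,2,3,3,2,0]) := by decide
lemma hbig : (∑ m : Fin 32, ∑ n : Fin 32, tZ (pmul pE (pmul (pmul (tabB m) pE) (tabA n)))) = 2 := by decide


lemma genA_eq : ∀ i, genA i = toMat (pA i) := by
  intro i
  fin_cases i <;> simp [genA, pA, toMat, Ipow, zval0]

lemma genB_eq : ∀ i, genB i = toMat (pB i) := by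
  intro i
  fin_cases i <;> simp [genB, pB, toMat, Ipow, zval0]

lemma stabProj_eq (g : Fin 5 → Matrix (Fin 6 → ZMod 2) (Fin 6 → ZMod 2) ℂ)
    (p : Fin 5 → Pp) (hg : ∀ i, g i = toMat (p i)) :
    stabProj g = (1 / 32 : ℂ) • ∑ v : Fin 5 → Bool, toMat (qP p v) := by
  unfold stabProj
  congr 1
  refine Finset.sum_congr rfl fun v _ => ?_
  unfold qP
  rw [← toMat_listProd, List.map_ofFn]
  refine congrArg List.prod (congrArg List.ofFn (funext fun i => ?_))
  by_cases h : v i <;> simp [Function.comp, h, hg i, toMat_one]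

lemma sum_tab (p : Fin 5 → Pp) (tab : Fin 32 → Pp) (htab : ∀ n, qP p (vof n) = tab n)
    (f : Pp → Matrix (Fin 6 → ZMod 2) (Fin 6 → ZMod 2) ℂ) :
    (∑ v : Fin 5 → Bool, f (qP p v)) = ∑ n : Fin 32, f (tab n) :=
  (Fintype.sum_bijective vof hvof _ _ fun n => by rw [htab n]).symm

lemma SA_eq : stabProj genA = (1 / 32 : ℂ) • ∑ n : Fin 32, toMat (tabA n) := by
  rw [stabProj_eq genA pA genA_eq, sum_tab pA tabA htabA]

lemma SB_eq : stabProj genB = (1 / 32 : ℂ) • ∑ n : Fin 32, toMat (tabB n) := by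
  rw [stabProj_eq genB pB genB_eq, sum_tab pB tabB htabB]

lemma proj_fix (g : Fin 5 → Matrix (Fin 6 → ZMod 2) (Fin 6 → ZMod 2) ℂ)
    (p : Fin 5 → Pp) (tab : Fin 32 → Pp)
    (hS : stabProj g = (1 / 32 : ℂ) • ∑ n : Fin 32, toMat (tab n))
    (hg : ∀ i, g i = toMat (p i))
    (hperm : ∀ i n, pmul (p i) (tab n) = tab (pf i n)) (i : Fin 5) :
    g i * stabProj g = stabProj g := by
  rw [hS, hg i, Matrix.mul_smul, Finset.mul_sum]
  congr 1
  rw [show (∑ n : Fin 32, toMat (p i) * toMat (tab n)) = ∑ n : Fin 32, toMat (tab (pf i n)) from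
    Finset.sum_congr rfl fun n _ => by rw [← toMat_mul, hperm]]
  exact Fintype.sum_bijective (pf i) (hpfbij i) _ _ fun n => rfl

lemma trace_proj (g : Fin 5 → Matrix (Fin 6 → ZMod 2) (Fin 6 → ZMod 2) ℂ)
    (tab : Fin 32 → Pp)
    (hS : stabProj g = (1 / 32 : ℂ) • ∑ n : Fin 32, toMat (tab n))
    (htz : (∑ n : Fin 32, tZ (tab n)) = 1) :
    (stabProj g).trace = 2 := by
  rw [hS, Matrix.trace_smul, Matrix.trace_sum]
  rw [show (∑ n : Fin 32, (toMat (tab n)).trace)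
      = ∑ n : Fin 32, 64 * GaussianInt.toComplex (tZ (tab n)) from
    Finset.sum_congr rfl fun n _ => trace_toMat _]
  rw [← Finset.mul_sum, ← map_sum, htz]
  norm_num [GaussianInt.toComplex_def]

lemma mem_code (g : Fin 5 → Matrix (Fin 6 → ZMod 2) (Fin 6 → ZMod 2) ℂ)
    (x : EuclideanSpace ℂ (Fin 6 → ZMod 2)) :
    x ∈ stabCode g ↔ ∀ i, Matrix.toEuclideanLin (g i) x = x := by
  simp [stabCode, Submodule.mem_iInf, LinearMap.mem_ker, LinearMap.sub_apply,
    sub_eq_zero]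

lemma tEL_mul (A B : Matrix (Fin 6 → ZMod 2) (Fin 6 → ZMod 2) ℂ)
    (x : EuclideanSpace ℂ (Fin 6 → ZMod 2)) :
    Matrix.toEuclideanLin (A * B) x = Matrix.toEuclideanLin A (Matrix.toEuclideanLin B x) := by
  rw [Matrix.toEuclideanLin_eq_toLin,
    Matrix.toLin_mul (PiLp.basisFun 2 ℂ _) (PiLp.basisFun 2 ℂ _) (PiLp.basisFun 2 ℂ _)]
  rfl

lemma tEL_one (x : EuclideanSpace ℂ (Fin 6 → ZMod 2)) :
    Matrix.toEuclideanLin (1 : Matrix (Fin 6 → ZMod 2) (Fin 6 → ZMod 2) ℂ) x = x := by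
  rw [Matrix.toEuclideanLin_eq_toLin, Matrix.toLin_one]
  rfl

lemma trace_tEL (A : Matrix (Fin 6 → ZMod 2) (Fin 6 → ZMod 2) ℂ) :
    LinearMap.trace ℂ _ (Matrix.toEuclideanLin A) = A.trace := by
  rw [Matrix.toEuclideanLin_eq_toLin,
    LinearMap.trace_eq_matrix_trace ℂ (PiLp.basisFun 2 ℂ _), LinearMap.toMatrix_toLin]

lemma listfix (x : EuclideanSpace ℂ (Fin 6 → ZMod 2))
    (l : List (Matrix (Fin 6 → ZMod 2) (Fin 6 → ZMod 2) ℂ))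
    (h : ∀ A ∈ l, Matrix.toEuclideanLin A x = x) :
    Matrix.toEuclideanLin l.prod x = x := by
  induction l with
  | nil => simpa using tEL_one x
  | cons hd t ih =>
    rw [List.prod_cons, tEL_mul, ih (fun A hA => h A (List.mem_cons_of_mem hd hA))]
    exact h hd List.mem_cons_self

lemma proj_isProj (g : Fin 5 → Matrix (Fin 6 → ZMod 2) (Fin 6 → ZMod 2) ℂ)
    (hfix : ∀ i, g i * stabProj g = stabProj g) :
    LinearMap.IsProj (stabCode g) (Matrix.toEuclideanLin (stabProj g)) := by
  constructor
  · intro x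
    rw [mem_code]
    intro i
    rw [← tEL_mul, hfix i]
  · intro x hx
    unfold stabProj
    rw [_root_.map_smul, map_sum, LinearMap.smul_apply, LinearMap.sum_apply]
    have : ∀ v : Fin 5 → Bool,
        Matrix.toEuclideanLin ((List.ofFn fun i => if v i then g i else 1).prod) x = x := by
      intro v
      refine listfix x _ fun A hA => ?_
      obtain ⟨i, rfl⟩ := Set.mem_range.mp (List.mem_ofFn.mp hA)
      by_cases h : v i
      · simpa [h] using (mem_code g x).mp hx i
      · simpa [h] using tEL_one x
    rw [Finset.sum_congr rfl fun v _ => this v, Finset.sum_const]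
    simp only [Finset.card_univ]
    rw [show Fintype.card (Fin 5 → Bool) = 32 by simp]
    rw [← Nat.cast_smul_eq_nsmul ℂ, smul_smul]
    norm_num

lemma finrank_code (g : Fin 5 → Matrix (Fin 6 → ZMod 2) (Fin 6 → ZMod 2) ℂ)
    (hfix : ∀ i, g i * stabProj g = stabProj g)
    (htr : (stabProj g).trace = 2) :
    Module.finrank ℂ (stabCode g) = 2 := by
  have h := (proj_isProj g hfix).trace
  rw [trace_tEL, htr] at h
  exact_mod_cast h.symm


noncomputable def qM : Pp := pmul (pA 1) (pmul (pA 2) (pA 3))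

lemma MA_eq : toMat qM = genA 1 * (genA 2 * genA 3) := by
  rw [genA_eq, genA_eq, genA_eq, ← toMat_mul, ← toMat_mul]; rfl

lemma Mherm : (toMat qM)ᴴ = toMat qM := by
  unfold qM
  rw [hwit1]
  show (Ipow 0 • pauliString ![0,2,3,3,2,0])ᴴ = Ipow 0 • pauliString ![0,2,3,3,2,0]
  simp [Ipow, zval0, pauliString_herm]

lemma Mneg : toMat qM = -(genB 1 * (genB 3 * genB 4)) := by
  rw [genB_eq, genB_eq, genB_eq, ← toMat_mul, ← toMat_mul]
  show toMat (pmul (pA 1) (pmul (pA 2) (pA 3))) = -(toMat (pmul (pB 1) (pmul (pB 3) (pB 4))))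
  rw [hwit1, hwit2]
  show Ipow 0 • pauliString ![0,2,3,3,2,0] = -(Ipow 2 • pauliString ![0,2,3,3,2,0])
  simp [Ipow, zval0, zval2, Complex.I_sq]

lemma orth : ∀ u ∈ stabCode genA, ∀ v ∈ stabCode genB, ⟪u, v⟫_ℂ = 0 := by
  intro u hu v hv
  have hfu : Matrix.toEuclideanLin (toMat qM) u = u := by
    rw [MA_eq, tEL_mul, tEL_mul, (mem_code genA u).mp hu 3, (mem_code genA u).mp hu 2,
      (mem_code genA u).mp hu 1]
  have hfv : Matrix.toEuclideanLin (toMat qM) v = -v := by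
    rw [Mneg, map_neg, LinearMap.neg_apply, tEL_mul, tEL_mul,
      (mem_code genB v).mp hv 4, (mem_code genB v).mp hv 3, (mem_code genB v).mp hv 1]
  have hadj : LinearMap.adjoint (Matrix.toEuclideanLin (toMat qM))
      = Matrix.toEuclideanLin (toMat qM) := by
    rw [← Matrix.toEuclideanLin_conjTranspose_eq_adjoint, Mherm]
  have h1 : ⟪u, v⟫_ℂ = -⟪u, v⟫_ℂ := by
    conv_lhs => rw [show v = -(Matrix.toEuclideanLin (toMat qM) v) by rw [hfv, neg_neg]]
    rw [inner_neg_right, ← hadj, LinearMap.adjoint_inner_right, hfu]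
  linear_combination h1 / 2

lemma hE : pauliString ![0,0,0,0,1,0] = toMat pE := by
  simp [toMat, pE, Ipow, zval0]

lemma expand_trace :
    (toMat pE * (stabProj genB * toMat pE * stabProj genA)).trace = 1 / 8 := by
  rw [SB_eq, SA_eq]
  simp only [smul_mul_assoc, mul_smul_comm]
  rw [show (∑ m : Fin 32, toMat (tabB m)) * toMat pE
      = ∑ m : Fin 32, toMat (pmul (tabB m) pE) from by
    rw [Finset.sum_mul]; exact Finset.sum_congr rfl fun m _ => (toMat_mul _ _).symm]
  rw [Finset.sum_mul, Finset.mul_sum]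
  rw [show (∑ m : Fin 32, toMat pE * (toMat (pmul (tabB m) pE) * ∑ n : Fin 32, toMat (tabA n)))
      = ∑ m : Fin 32, ∑ n : Fin 32,
          toMat (pmul pE (pmul (pmul (tabB m) pE) (tabA n))) from
    Finset.sum_congr rfl fun m _ => by
      rw [Finset.mul_sum, Finset.mul_sum]
      exact Finset.sum_congr rfl fun n _ => by rw [← toMat_mul, ← toMat_mul]]
  rw [Matrix.trace_smul, Matrix.trace_smul, Matrix.trace_sum]
  rw [show (∑ m : Fin 32, (∑ n : Fin 32,
        toMat (pmul pE (pmul (pmul (tabB m) pE) (tabA n)))).trace)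
      = ∑ m : Fin 32, ∑ n : Fin 32,
          (64 : ℂ) * GaussianInt.toComplex (tZ (pmul pE (pmul (pmul (tabB m) pE) (tabA n)))) from
    Finset.sum_congr rfl fun m _ => by
      rw [Matrix.trace_sum]
      exact Finset.sum_congr rfl fun n _ => trace_toMat _]
  simp only [← Finset.mul_sum, ← map_sum]
  rw [hbig]
  norm_num [GaussianInt.toComplex_def, smul_eq_mul]

lemma final : stabProj genB * pauliString ![0,0,0,0,1,0] * stabProj genA ≠ 0 := by
  intro h
  rw [hE] at h
  have h2 := congrArg (fun X => (toMat pE * X).trace) h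
  simp only [mul_zero, Matrix.trace_zero] at h2
  rw [expand_trace] at h2
  norm_num at h2

/-- the stabilizer groups `S_a` and `S_b` each define a
2-dimensional joint `+1`-eigenspace in `(ℂ²)^{⊗6}`, these two subspaces are
orthogonal, and the resulting hybrid code has minimum distance `1`: the
weight-one error `E = IIIIXI` satisfies `P_b E P_a ≠ 0`. -/
theorem stmt_18 :
    Module.finrank ℂ (stabCode genA) = 2 ∧
    Module.finrank ℂ (stabCode genB) = 2 ∧
    (∀ u ∈ stabCode genA, ∀ v ∈ stabCode genB, ⟪u, v⟫_ℂ = 0) ∧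
    stabProj genB * pauliString ![0,0,0,0,1,0] * stabProj genA ≠ 0 := by
  refine ⟨?_, ?_, orth, final⟩
  · exact finrank_code genA (proj_fix genA pA tabA SA_eq genA_eq hpermA)
      (trace_proj genA tabA SA_eq htZA)
  · exact finrank_code genB (proj_fix genB pB tabB SB_eq genB_eq hpermB)
      (trace_proj genB tabB SB_eq htZB)
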